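/- If the node-existence ground loss ℓ_h is constant, then PMFGW equals the partial Fused Gromov-Wasserstein discrepancy plus a constant independent of the transport plan and of the prediction's structure and features. -/

import Mathlib

/-- Doubly stochastic M×M matrices. -/
def DS (M : ℕ) : Set (Matrix (Fin M) (Fin M) ℝ) :=
  {T | (∀ i j, 0 ≤ T i j) ∧ (∀ i, ∑ j, T i j = 1) ∧ (∀ j, ∑ i, T i j = 1)}

/-- Partial transport plans `π_{M,m}`. -/
def partialPlans (M m : ℕ) : Set (Matrix (Fin M) (Fin m) ℝ) :=
  {T | (∀ i j, T i j ∈ Set.Icc (0 : ℝ) 1) ∧ (∀ i, ∑ j, T i j ≤ 1) ∧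
       (∀ j, ∑ i, T i j = 1) ∧ (∑ i, ∑ j, T i j = (m : ℝ))}

/-! ### Auxiliary material -/

theorem PMFGW.sum_ind {M m : ℕ} (hm : m ≤ M) (φ : Fin M → ℝ) :
    ∑ j : Fin M, φ j * (if (j:ℕ) < m then (1:ℝ) else 0)
      = ∑ j : Fin m, φ (Fin.castLE hm j) := by
  have : ∀ j : Fin m, φ (Fin.castLE hm j) = φ ((Fin.castLEEmb hm) j) := fun j => rfl
  simp_rw [this]
  rw [← Finset.sum_map Finset.univ (Fin.castLEEmb hm) φ]
  rw [← Finset.sum_subset (Finset.subset_univ _)]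
  · apply Finset.sum_congr rfl
    intro j hj
    simp only [Finset.mem_map, Finset.mem_univ, true_and] at hj
    obtain ⟨a, rfl⟩ := hj
    simp [Fin.castLEEmb]
  · intro j _ hj
    simp only [Finset.mem_map, Finset.mem_univ, true_and] at hj
    have : ¬ (j : ℕ) < m := fun hlt => hj ⟨⟨(j:ℕ), hlt⟩, rfl⟩
    simp [this]

/-- Restriction of a plan to the first `m` columns. -/
def PMFGW.restrict {M m : ℕ} (hm : m ≤ M) (T : Matrix (Fin M) (Fin M) ℝ) :
    Matrix (Fin M) (Fin m) ℝ := fun i j => T i (Fin.castLE hm j)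

theorem PMFGW.restrict_mem {M m : ℕ} (hm : m ≤ M) {T : Matrix (Fin M) (Fin M) ℝ}
    (hT : T ∈ DS M) : PMFGW.restrict hm T ∈ partialPlans M m := by
  obtain ⟨hnn, hrow, hcol⟩ := hT
  have hle1 : ∀ i j, T i j ≤ 1 := by
    intro i j
    calc T i j ≤ ∑ j', T i j' :=
      Finset.single_le_sum (fun j' _ => hnn i j') (Finset.mem_univ j)
    _ = 1 := hrow i
  have hrowle : ∀ i, ∑ j : Fin m, PMFGW.restrict hm T i j ≤ 1 := by
    intro i
    rw [← hrow i]
    have : ∑ j : Fin m, PMFGW.restrict hm T i j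
        = ∑ j ∈ Finset.univ.map (Fin.castLEEmb hm), T i j := by
      rw [Finset.sum_map]; rfl
    rw [this]
    exact Finset.sum_le_sum_of_subset_of_nonneg (Finset.subset_univ _)
      (fun j _ _ => hnn i j)
  refine ⟨fun i j => ⟨hnn i _, hle1 i _⟩, hrowle, fun j => hcol _, ?_⟩
  rw [show ∑ i, ∑ j, PMFGW.restrict hm T i j = ∑ j, ∑ i, PMFGW.restrict hm T i j from Finset.sum_comm]
  simp only [PMFGW.restrict]
  rw [Finset.sum_congr rfl (fun j _ => hcol (Fin.castLE hm j))]
  simp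

/-- Extension of a partial plan to a doubly stochastic matrix, filling the remaining columns
uniformly with the row deficits. -/
noncomputable def PMFGW.extend {M m : ℕ} (hm : m ≤ M) (Tp : Matrix (Fin M) (Fin m) ℝ) :
    Matrix (Fin M) (Fin M) ℝ := fun i j =>
  if hj : (j : ℕ) < m then Tp i ⟨j, hj⟩ else (1 - ∑ j', Tp i j') / ((M : ℝ) - m)

theorem PMFGW.restrict_extend_entry {M m : ℕ} (hm : m ≤ M)
    (Tp : Matrix (Fin M) (Fin m) ℝ) (i : Fin M) (j : Fin m) :
    PMFGW.extend hm Tp i (Fin.castLE hm j) = Tp i j := by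
  simp [PMFGW.restrict, PMFGW.extend, j.isLt]

theorem PMFGW.extend_mem {M m : ℕ} (hm : m ≤ M) {Tp : Matrix (Fin M) (Fin m) ℝ}
    (hTp : Tp ∈ partialPlans M m) : PMFGW.extend hm Tp ∈ DS M := by
  obtain ⟨h01, hrow, hcol, htot⟩ := hTp
  set s : Fin M → ℝ := fun i => ∑ j, Tp i j with hs
  have hdef : ∑ i, (1 - s i) = (M : ℝ) - m := by
    rw [Finset.sum_sub_distrib]
    rw [show ∑ i, s i = (m:ℝ) from htot]; simp
  have hnn' : ∀ i, 0 ≤ 1 - s i := fun i => by linarith [hrow i]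
  have hMm : (0:ℝ) ≤ (M:ℝ) - m := by
    have : (m:ℝ) ≤ M := by exact_mod_cast hm
    linarith
  have hrow1 : m = M → ∀ i, s i = 1 := by
    intro hmM i
    have h0 : ∑ i, (1 - s i) = 0 := by rw [hdef, hmM]; ring
    have := (Finset.sum_eq_zero_iff_of_nonneg (fun i _ => hnn' i)).mp h0 i
      (Finset.mem_univ i)
    linarith
  have hrowsum : ∀ i, ∑ j : Fin M, PMFGW.extend hm Tp i j = 1 := by
    intro i
    have hfun : ∀ j : Fin M, PMFGW.extend hm Tp i j =
        (fun n : ℕ => if hn : n < m then Tp i ⟨n, hn⟩ else (1 - s i) / ((M:ℝ) - m)) j := by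
      intro j; rfl
    rw [Finset.sum_congr rfl (fun j _ => hfun j)]
    rw [Fin.sum_univ_eq_sum_range (fun n : ℕ => if hn : n < m then Tp i ⟨n, hn⟩ else (1 - s i) / ((M:ℝ) - m)) M]
    rw [Finset.range_eq_Ico, ← Finset.sum_Ico_consecutive _ (Nat.zero_le m) hm]
    have e1 : ∑ n ∈ Finset.Ico 0 m,
        (if hn : n < m then Tp i ⟨n, hn⟩ else (1 - s i) / ((M:ℝ) - m)) = s i := by
      rw [← Finset.range_eq_Ico, hs]
      rw [← Fin.sum_univ_eq_sum_range (fun n => if hn : n < m then Tp i ⟨n, hn⟩ else (1 - s i) / ((M:ℝ) - m)) m]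
      apply Finset.sum_congr rfl
      intro j _
      simp [j.isLt]
    have e2 : ∑ n ∈ Finset.Ico m M,
        (if hn : n < m then Tp i ⟨n, hn⟩ else (1 - s i) / ((M:ℝ) - m))
        = ((M : ℝ) - m) * ((1 - s i) / ((M:ℝ) - m)) := by
      have hc : ∀ n ∈ Finset.Ico m M,
          (if hn : n < m then Tp i ⟨n, hn⟩ else (1 - s i) / ((M:ℝ) - m))
            = (1 - s i) / ((M:ℝ) - m) := by
        intro n hn
        have : ¬ n < m := by simp only [Finset.mem_Ico] at hn; omega
        simp [this]
      rw [Finset.sum_congr rfl hc]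
      rw [Finset.sum_const, Nat.card_Ico, nsmul_eq_mul]
      congr 1
      push_cast [Nat.cast_sub hm]
      ring
    rw [e1, e2]
    rcases eq_or_lt_of_le hm with hmM | hmM
    · rw [hrow1 hmM i]
      have : (M:ℝ) - m = 0 := by rw [hmM]; ring
      rw [this]; ring
    · have hne : ((M:ℝ) - m) ≠ 0 := by
        have : (m:ℝ) < M := by exact_mod_cast hmM
        linarith
      field_simp
      ring
  refine ⟨?_, hrowsum, ?_⟩
  · intro i j
    by_cases hj : (j:ℕ) < m
    · simp only [PMFGW.extend, hj, dif_pos]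
      exact (h01 i ⟨j, hj⟩).1
    · simp only [PMFGW.extend, hj, dif_neg, not_false_iff]
      exact div_nonneg (hnn' i) hMm
  · intro j
    by_cases hj : (j:ℕ) < m
    · have : ∀ i, PMFGW.extend hm Tp i j = Tp i ⟨j, hj⟩ := by
        intro i; simp [PMFGW.extend, hj]
      rw [Finset.sum_congr rfl (fun i _ => this i)]
      exact hcol ⟨j, hj⟩
    · have hmM : m < M := lt_of_le_of_lt (Nat.not_lt.mp hj) j.isLt
      have hne : ((M:ℝ) - m) ≠ 0 := by
        have : (m:ℝ) < M := by exact_mod_cast hmM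
        linarith
      have : ∀ i, PMFGW.extend hm Tp i j = (1 - s i) / ((M:ℝ) - m) := by
        intro i; simp [PMFGW.extend, hj, hs]
      rw [Finset.sum_congr rfl (fun i _ => this i)]
      rw [← Finset.sum_div, hdef, div_self hne]

/-- The key decomposition of the PMFGW objective. -/
theorem PMFGW.decomp {M d m : ℕ} (hm : m ≤ M)
    (ℓh : ℝ → ℝ → ℝ) (ℓF : (Fin d → ℝ) → (Fin d → ℝ) → ℝ) (ℓA : ℝ → ℝ → ℝ)
    (c₀ : ℝ) (hconst : ∀ x y, ℓh x y = c₀)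
    (hh : Fin M → ℝ) (FF : Fin M → Fin d → ℝ) (AA : Matrix (Fin M) (Fin M) ℝ)
    (h : Fin M → ℝ) (F : Fin M → Fin d → ℝ) (A : Matrix (Fin M) (Fin M) ℝ)
    (hpad : ∀ j, h j = if (j : ℕ) < m then 1 else 0)
    (T : Matrix (Fin M) (Fin M) ℝ) (hrow : ∀ i, ∑ j, T i j = 1) :
    (∑ i, ∑ j, T i j * ℓh (hh i) (h j))
        + (∑ i, ∑ j, T i j * ℓF (FF i) (F j) * h j)
        + (∑ i, ∑ j, ∑ k, ∑ l, T i j * T k l * ℓA (AA i k) (A j l) * h j * h l)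
    = ((∑ i, ∑ j : Fin m, T i (Fin.castLE hm j) * ℓF (FF i) (F (Fin.castLE hm j)))
        + (∑ i, ∑ j : Fin m, ∑ k, ∑ l : Fin m, T i (Fin.castLE hm j) * T k (Fin.castLE hm l)
            * ℓA (AA i k) (A (Fin.castLE hm j) (Fin.castLE hm l))))
      + (M : ℝ) * c₀ := by
  have t1 : (∑ i, ∑ j, T i j * ℓh (hh i) (h j)) = (M : ℝ) * c₀ := by
    simp_rw [hconst, ← Finset.sum_mul, hrow]
    simp
  have t2 : (∑ i, ∑ j, T i j * ℓF (FF i) (F j) * h j)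
      = ∑ i, ∑ j : Fin m, T i (Fin.castLE hm j) * ℓF (FF i) (F (Fin.castLE hm j)) := by
    apply Finset.sum_congr rfl
    intro i _
    simp_rw [hpad]
    exact PMFGW.sum_ind hm (fun j => T i j * ℓF (FF i) (F j))
  have t3 : (∑ i, ∑ j, ∑ k, ∑ l, T i j * T k l * ℓA (AA i k) (A j l) * h j * h l)
      = ∑ i, ∑ j : Fin m, ∑ k, ∑ l : Fin m, T i (Fin.castLE hm j) * T k (Fin.castLE hm l)
          * ℓA (AA i k) (A (Fin.castLE hm j) (Fin.castLE hm l)) := by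
    apply Finset.sum_congr rfl
    intro i _
    have stepl : ∀ j k : Fin M,
        ∑ l, T i j * T k l * ℓA (AA i k) (A j l) * h j * h l
        = ∑ l : Fin m, T i j * T k (Fin.castLE hm l) * ℓA (AA i k) (A j (Fin.castLE hm l)) * h j := by
      intro j k
      simp_rw [hpad]
      exact PMFGW.sum_ind hm (fun l => T i j * T k l * ℓA (AA i k) (A j l)
        * (if (j:ℕ) < m then (1:ℝ) else 0))
    calc ∑ j, ∑ k, ∑ l, T i j * T k l * ℓA (AA i k) (A j l) * h j * h l
        = ∑ j, (∑ k, ∑ l : Fin m, T i j * T k (Fin.castLE hm l)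
            * ℓA (AA i k) (A j (Fin.castLE hm l))) * h j := by
          apply Finset.sum_congr rfl
          intro j _
          rw [Finset.sum_congr rfl (fun k _ => stepl j k)]
          rw [Finset.sum_mul]
          apply Finset.sum_congr rfl
          intro k _
          rw [Finset.sum_mul]
      _ = ∑ j : Fin m, ∑ k, ∑ l : Fin m, T i (Fin.castLE hm j) * T k (Fin.castLE hm l)
            * ℓA (AA i k) (A (Fin.castLE hm j) (Fin.castLE hm l)) := by
          simp_rw [hpad]
          exact PMFGW.sum_ind hm (fun j => ∑ k, ∑ l : Fin m, T i j * T k (Fin.castLE hm l)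
            * ℓA (AA i k) (A j (Fin.castLE hm l)))
  rw [t1, t2, t3]; ring

theorem PMFGW.sInf_shift (c : ℝ) (S : Set ℝ) (hne : S.Nonempty) (hb : BddBelow S) :
    sInf ((fun x => x + c) '' S) = sInf S + c := by
  obtain ⟨b, hbb⟩ := hb
  have hbimg : BddBelow ((fun x => x + c) '' S) := by
    refine ⟨b + c, ?_⟩
    rintro y ⟨x, hx, rfl⟩
    exact add_le_add_left (hbb hx) c
  apply le_antisymm
  · have : sInf ((fun x => x + c) '' S) - c ≤ sInf S := by
      apply le_csInf hne
      intro x hx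
      have := csInf_le hbimg (Set.mem_image_of_mem _ hx)
      linarith
    linarith
  · apply le_csInf (hne.image _)
    rintro y ⟨x, hx, rfl⟩
    exact add_le_add_left (csInf_le ⟨b, hbb⟩ hx) c

theorem PMFGW.cont_entry {M m : ℕ} (i : Fin M) (j : Fin m) :
    Continuous fun T : Matrix (Fin M) (Fin m) ℝ => T i j :=
  (continuous_apply j).comp (continuous_apply i)

theorem PMFGW.partialPlans_compact (M m : ℕ) : IsCompact (partialPlans M m) := by
  have hclosed : IsClosed (partialPlans M m) := by
    have : partialPlans M m =
        (⋂ i, ⋂ j, {T : Matrix (Fin M) (Fin m) ℝ | T i j ∈ Set.Icc (0:ℝ) 1})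
        ∩ ((⋂ i, {T : Matrix (Fin M) (Fin m) ℝ | ∑ j, T i j ≤ 1})
        ∩ ((⋂ j, {T : Matrix (Fin M) (Fin m) ℝ | ∑ i, T i j = 1})
        ∩ {T : Matrix (Fin M) (Fin m) ℝ | ∑ i, ∑ j, T i j = (m:ℝ)})) := by
      ext T
      simp [partialPlans, Set.mem_iInter, forall_and]
    rw [this]
    refine IsClosed.inter ?_ (IsClosed.inter ?_ (IsClosed.inter ?_ ?_))
    · exact isClosed_iInter fun i => isClosed_iInter fun j =>
        IsClosed.preimage (PMFGW.cont_entry i j) isClosed_Icc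
    · exact isClosed_iInter fun i => isClosed_le
        (continuous_finset_sum _ fun j _ => PMFGW.cont_entry i j) continuous_const
    · exact isClosed_iInter fun j => isClosed_eq
        (continuous_finset_sum _ fun i _ => PMFGW.cont_entry i j) continuous_const
    · exact isClosed_eq (continuous_finset_sum _ fun i _ =>
        continuous_finset_sum _ fun j _ => PMFGW.cont_entry i j) continuous_const
  have hsub : partialPlans M m ⊆
      Set.pi Set.univ (fun _ : Fin M => Set.pi Set.univ fun _ : Fin m => Set.Icc (0:ℝ) 1) := by
    intro T hT i _ j _
    exact hT.1 i j
  exact (isCompact_univ_pi fun _ => isCompact_univ_pi fun _ => isCompact_Icc).of_isClosed_subset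
    hclosed hsub

theorem PMFGW.cont_obj {M d m : ℕ} (hm : m ≤ M)
    (ℓF : (Fin d → ℝ) → (Fin d → ℝ) → ℝ) (ℓA : ℝ → ℝ → ℝ)
    (FF : Fin M → Fin d → ℝ) (AA : Matrix (Fin M) (Fin M) ℝ)
    (F : Fin M → Fin d → ℝ) (A : Matrix (Fin M) (Fin M) ℝ) :
    Continuous (fun Tp : Matrix (Fin M) (Fin m) ℝ =>
        (∑ i, ∑ j, Tp i j * ℓF (FF i) (F (Fin.castLE hm j)))
        + (∑ i, ∑ j, ∑ k, ∑ l, Tp i j * Tp k l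
            * ℓA (AA i k) (A (Fin.castLE hm j) (Fin.castLE hm l)))) := by
  apply Continuous.add
  · exact continuous_finset_sum _ fun i _ => continuous_finset_sum _ fun j _ =>
      (PMFGW.cont_entry i j).mul continuous_const
  · exact continuous_finset_sum _ fun i _ => continuous_finset_sum _ fun j _ =>
      continuous_finset_sum _ fun k _ => continuous_finset_sum _ fun l _ =>
      ((PMFGW.cont_entry i j).mul (PMFGW.cont_entry k l)).mul continuous_const

theorem PMFGW.id_mem_DS (M : ℕ) :
    (fun i j => if i = j then (1:ℝ) else 0) ∈ DS M := by
  refine ⟨fun i j => by dsimp only; split <;> norm_num, fun i => ?_, fun j => ?_⟩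
  · simp
  · simp

/-- If the node-existence ground loss `ℓ_h` is constant equal to `c₀`, then PMFGW equals the
partial Fused Gromov-Wasserstein discrepancy plus the constant `M * c₀`, which is independent
of the transport plan and of the prediction's structure and features. -/
theorem pmfgw_eq_partial_fgw_add_const {M d m : ℕ} (hm : m ≤ M)
    (ℓh : ℝ → ℝ → ℝ) (ℓF : (Fin d → ℝ) → (Fin d → ℝ) → ℝ) (ℓA : ℝ → ℝ → ℝ)
    (c₀ : ℝ) (hconst : ∀ x y, ℓh x y = c₀)
    -- prediction
    (hh : Fin M → ℝ) (FF : Fin M → Fin d → ℝ) (AA : Matrix (Fin M) (Fin M) ℝ)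
    -- padded target, with mask indicator of the first m nodes
    (h : Fin M → ℝ) (F : Fin M → Fin d → ℝ) (A : Matrix (Fin M) (Fin M) ℝ)
    (hpad : ∀ j, h j = if (j : ℕ) < m then 1 else 0) :
    sInf ((fun T : Matrix (Fin M) (Fin M) ℝ =>
        (∑ i, ∑ j, T i j * ℓh (hh i) (h j))
        + (∑ i, ∑ j, T i j * ℓF (FF i) (F j) * h j)
        + (∑ i, ∑ j, ∑ k, ∑ l, T i j * T k l * ℓA (AA i k) (A j l) * h j * h l)) '' DS M)
      = sInf ((fun Tp : Matrix (Fin M) (Fin m) ℝ =>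
        (∑ i, ∑ j, Tp i j * ℓF (FF i) (F (Fin.castLE hm j)))
        + (∑ i, ∑ j, ∑ k, ∑ l, Tp i j * Tp k l
            * ℓA (AA i k) (A (Fin.castLE hm j) (Fin.castLE hm l)))) '' partialPlans M m)
        + (M : ℝ) * c₀ := by
  set f : Matrix (Fin M) (Fin M) ℝ → ℝ := fun T =>
        (∑ i, ∑ j, T i j * ℓh (hh i) (h j))
        + (∑ i, ∑ j, T i j * ℓF (FF i) (F j) * h j)
        + (∑ i, ∑ j, ∑ k, ∑ l, T i j * T k l * ℓA (AA i k) (A j l) * h j * h l) with hf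
  set g : Matrix (Fin M) (Fin m) ℝ → ℝ := fun Tp =>
        (∑ i, ∑ j, Tp i j * ℓF (FF i) (F (Fin.castLE hm j)))
        + (∑ i, ∑ j, ∑ k, ∑ l, Tp i j * Tp k l
            * ℓA (AA i k) (A (Fin.castLE hm j) (Fin.castLE hm l))) with hg
  have hdec : ∀ T ∈ DS M, f T = g (PMFGW.restrict hm T) + (M : ℝ) * c₀ := by
    intro T hT
    exact PMFGW.decomp hm ℓh ℓF ℓA c₀ hconst hh FF AA h F A hpad T hT.2.1
  have key : f '' DS M = (fun x => x + (M : ℝ) * c₀) '' (g '' partialPlans M m) := by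
    ext y
    constructor
    · rintro ⟨T, hT, rfl⟩
      exact ⟨g (PMFGW.restrict hm T),
        ⟨PMFGW.restrict hm T, PMFGW.restrict_mem hm hT, rfl⟩, (hdec T hT).symm⟩
    · rintro ⟨-, ⟨Tp, hTp, rfl⟩, rfl⟩
      refine ⟨PMFGW.extend hm Tp, PMFGW.extend_mem hm hTp, ?_⟩
      have := hdec (PMFGW.extend hm Tp) (PMFGW.extend_mem hm hTp)
      rw [this]
      congr 1
      have hre : PMFGW.restrict hm (PMFGW.extend hm Tp) = Tp := by
        ext i j
        exact PMFGW.restrict_extend_entry hm Tp i j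
      rw [hre]
  have hne : (g '' partialPlans M m).Nonempty := by
    refine ⟨g (PMFGW.restrict hm (fun i j => if i = j then (1:ℝ) else 0)),
      ⟨_, PMFGW.restrict_mem hm (PMFGW.id_mem_DS M), rfl⟩⟩
  have hbdd : BddBelow (g '' partialPlans M m) :=
    ((PMFGW.partialPlans_compact M m).image (PMFGW.cont_obj hm ℓF ℓA FF AA F A)).bddBelow
  rw [key, PMFGW.sInf_shift _ _ hne hbdd]
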